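/- The six operators E₁,…,E₆ on ℂ³ ⊗ ℂ³ satisfy ∑_{k=1}^{6} E_k |ψ₁⟩⟨ψ₁| E_k† = |φ⟩⟨φ|, where ψ₁ = (|0⟩⊗|1⟩ + |1⟩⊗|0⟩)/√2 and φ = √α(β|0⟩⊗|0⟩ + |1⟩⊗|1⟩). -/

import Mathlib

open Kronecker Matrix ComplexOrder

noncomputable section

/-- Product (simple) vector in `ℂ^a ⊗ ℂ^b`, identified with functions `Fin a × Fin b → ℂ`. -/
def IsSimpleVec {a b : ℕ} (v : Fin a × Fin b → ℂ) : Prop :=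
  ∃ (x : Fin a → ℂ) (y : Fin b → ℂ), v = fun p => x p.1 * y p.2

/-- Rank-one projection `|v⟩⟨v|`. -/
def proj {d : Type*} [Fintype d] (v : d → ℂ) : Matrix d d ℂ :=
  Matrix.vecMulVec v (star v)

/-- The standard basis vector `|i⟩` of `ℂ³`. -/
def e (i : Fin 3) : Fin 3 → ℂ := Pi.single i 1

/-- The matrix unit `|i⟩⟨j|` on `ℂ³`. -/
def u (i j : Fin 3) : Matrix (Fin 3) (Fin 3) ℂ := Matrix.single i j 1

/-- `α = (2 − √3)/4`. -/
def α : ℝ := (2 - Real.sqrt 3) / 4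

/-- `β = 2 + √3`. -/
def β : ℝ := 2 + Real.sqrt 3

/-- `√α` as a complex number. -/
def sα : ℂ := ((Real.sqrt α : ℝ) : ℂ)

/-- `√β` as a complex number. -/
def sβ : ℂ := ((Real.sqrt β : ℝ) : ℂ)

/-- `√(2αβ)` as a complex number. -/
def sγ : ℂ := ((Real.sqrt (2 * α * β) : ℝ) : ℂ)

/-- The six Kraus operators `E₁, …, E₆` on `ℂ³ ⊗ ℂ³`. -/
def E : Fin 6 → Matrix (Fin 3 × Fin 3) (Fin 3 × Fin 3) ℂ :=
  ![sα • ((sβ • u 0 0 + u 1 1) ⊗ₖ (sβ • u 0 1 + u 1 0)),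
    sα • ((u 1 0 + sβ • u 0 1) ⊗ₖ (u 1 1 + sβ • u 0 0)),
    sα • ((sβ • u 0 0 + u 1 2) ⊗ₖ (sβ • u 0 2 + u 1 0)),
    sα • ((u 1 0 + sβ • u 0 2) ⊗ₖ (u 1 2 + sβ • u 0 0)),
    u 1 1 ⊗ₖ (sγ • u 1 1 + u 2 2),
    u 2 2 ⊗ₖ (u 1 1 + sγ • u 2 2)]

/-- `ψ₁ = (|0⟩⊗|1⟩ + |1⟩⊗|0⟩)/√2`. -/
def ψ₁ : Fin 3 × Fin 3 → ℂ :=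
  ((Real.sqrt 2 : ℝ) : ℂ)⁻¹ • (fun p => e 0 p.1 * e 1 p.2 + e 1 p.1 * e 0 p.2)

/-- `ψ₂ = (|0⟩⊗|2⟩ + |2⟩⊗|0⟩)/√2`. -/
def ψ₂ : Fin 3 × Fin 3 → ℂ :=
  ((Real.sqrt 2 : ℝ) : ℂ)⁻¹ • (fun p => e 0 p.1 * e 2 p.2 + e 2 p.1 * e 0 p.2)

/-- `φ = √α(β|0⟩⊗|0⟩ + |1⟩⊗|1⟩)`. -/
def φ : Fin 3 × Fin 3 → ℂ :=
  sα • (fun p => ((β : ℝ) : ℂ) * (e 0 p.1 * e 0 p.2) + e 1 p.1 * e 1 p.2)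


lemma conj_proj {d : Type*} [Fintype d] [DecidableEq d] (A : Matrix d d ℂ) (v : d → ℂ) :
    A * proj v * Aᴴ = proj (A *ᵥ v) := by
  ext i j
  simp [proj, Matrix.mul_apply, Matrix.vecMulVec_apply, Matrix.mulVec, dotProduct,
    Matrix.conjTranspose_apply, Finset.sum_mul, Finset.mul_sum, map_sum]
  congr 1; funext q; congr 1; funext p; ring

lemma proj_smul {d : Type*} [Fintype d] (c : ℂ) (v : d → ℂ) :
    proj (c • v) = (c * star c) • proj v := by
  ext i j
  simp [proj, Matrix.vecMulVec_apply]
  ring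

lemma proj_zero {d : Type*} [Fintype d] : proj (0 : d → ℂ) = 0 := by
  ext i j; simp [proj, Matrix.vecMulVec_apply]

lemma sβ_sq : sβ * sβ = ((β : ℝ) : ℂ) := by
  rw [sβ, ← Complex.ofReal_mul, Real.mul_self_sqrt]
  rw [β]; positivity


lemma E0 : E 0 = sα • ((sβ • u 0 0 + u 1 1) ⊗ₖ (sβ • u 0 1 + u 1 0)) := rfl
lemma E1 : E 1 = sα • ((u 1 0 + sβ • u 0 1) ⊗ₖ (u 1 1 + sβ • u 0 0)) := rfl
lemma E2 : E 2 = sα • ((sβ • u 0 0 + u 1 2) ⊗ₖ (sβ • u 0 2 + u 1 0)) := rfl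
lemma E3 : E 3 = sα • ((u 1 0 + sβ • u 0 2) ⊗ₖ (u 1 2 + sβ • u 0 0)) := rfl
lemma E4 : E 4 = u 1 1 ⊗ₖ (sγ • u 1 1 + u 2 2) := rfl
lemma E5 : E 5 = u 2 2 ⊗ₖ (u 1 1 + sγ • u 2 2) := rfl

lemma h0 : (E 0) *ᵥ ψ₁ = (((Real.sqrt 2 : ℝ) : ℂ))⁻¹ • φ := by
  rw [E0]
  funext p
  fin_cases p <;>
    · simp [ψ₁, φ, u, e, Matrix.mulVec, dotProduct, Fintype.sum_prod_type,
        Fin.sum_univ_succ, Matrix.single, Pi.single_apply]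
      try ring_nf
      try simp [sβ_sq, pow_two, mul_assoc]
      try ring
      try exact Or.inl trivial

lemma h1 : (E 1) *ᵥ ψ₁ = (((Real.sqrt 2 : ℝ) : ℂ))⁻¹ • φ := by
  rw [E1]
  funext p
  fin_cases p <;>
    · simp [ψ₁, φ, u, e, Matrix.mulVec, dotProduct, Fintype.sum_prod_type,
        Fin.sum_univ_succ, Matrix.single, Pi.single_apply]
      try ring_nf
      try simp [sβ_sq, pow_two, mul_assoc]
      try ring
      try exact Or.inl trivial

lemma h2 : (E 2) *ᵥ ψ₁ = 0 := by
  rw [E2]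
  funext p
  fin_cases p <;>
    simp [ψ₁, u, e, Matrix.mulVec, dotProduct, Fintype.sum_prod_type,
      Fin.sum_univ_succ, Matrix.single, Pi.single_apply]

lemma h3 : (E 3) *ᵥ ψ₁ = 0 := by
  rw [E3]
  funext p
  fin_cases p <;>
    simp [ψ₁, u, e, Matrix.mulVec, dotProduct, Fintype.sum_prod_type,
      Fin.sum_univ_succ, Matrix.single, Pi.single_apply]

lemma h4 : (E 4) *ᵥ ψ₁ = 0 := by
  rw [E4]
  funext p
  fin_cases p <;>
    simp [ψ₁, u, e, Matrix.mulVec, dotProduct, Fintype.sum_prod_type,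
      Fin.sum_univ_succ, Matrix.single, Pi.single_apply]

lemma h5 : (E 5) *ᵥ ψ₁ = 0 := by
  rw [E5]
  funext p
  fin_cases p <;>
    simp [ψ₁, u, e, Matrix.mulVec, dotProduct, Fintype.sum_prod_type,
      Fin.sum_univ_succ, Matrix.single, Pi.single_apply]

lemma half : ((((Real.sqrt 2 : ℝ) : ℂ))⁻¹ * star (((Real.sqrt 2 : ℝ) : ℂ))⁻¹) = 1/2 := by
  rw [Complex.star_def, ← Complex.ofReal_inv, Complex.conj_ofReal, ← Complex.ofReal_mul,
    ← mul_inv, Real.mul_self_sqrt (by norm_num)]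
  norm_num

theorem kraus_maps_psi_one_to_phi : ∑ k, E k * proj ψ₁ * (E k)ᴴ = proj φ := by
  rw [Fin.sum_univ_six]
  simp only [conj_proj, h0, h1, h2, h3, h4, h5, proj_zero, proj_smul, half]
  module
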